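/- Let S* ⊆ (0, ∞) be open and additive, S = [0, ∞) \ S* nonempty and bounded with L = sup S. For x ∈ [0, L] define a(x) = sup{ y ∈ ∂S : y ≤ x } and b(x) = inf{ y ∈ ∂S : y ≥ x }, and α(x) = x − a(x), β(x) = b(x) − x. Then for all s ∈ S ∩ [0, L], α(s) ∈ S and β(s) ∈ S. -/
import Mathlib


theorem alpha_beta_in_S (Sstar : Set ℝ) (hsub : Sstar ⊆ Set.Ioi 0)
    (hopen : IsOpen Sstar) (hadd : ∀ p ∈ Sstar, ∀ q ∈ Sstar, p + q ∈ Sstar)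
    (S : Set ℝ) (hS : S = Set.Ici (0 : ℝ) \ Sstar)
    (hne : S.Nonempty) (hbdd : BddAbove S) (L : ℝ) (hL : L = sSup S)
    (a b : ℝ → ℝ)
    (ha : ∀ x, a x = sSup {y | y ∈ frontier S ∧ y ≤ x})
    (hb : ∀ x, b x = sInf {y | y ∈ frontier S ∧ x ≤ y}) :
    ∀ s ∈ S ∩ Set.Icc 0 L, (s - a s) ∈ S ∧ (b s - s) ∈ S := by
  have hSclosed : IsClosed S := hS ▸ isClosed_Ici.sdiff hopen
  have hSsub : S ⊆ Set.Ici 0 := by rw [hS]; exact Set.diff_subset_iff.mpr (by simp)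
  have hdisj : ∀ x ∈ Sstar, x ∉ S := by
    intro x hx hxS
    rw [hS] at hxS; exact hxS.2 hx
  have hmemS : ∀ x : ℝ, 0 ≤ x → x ∉ Sstar → x ∈ S := by
    intro x hx hx'; rw [hS]; exact ⟨hx, hx'⟩
  have h0S : (0 : ℝ) ∈ S := hmemS 0 le_rfl (fun h => lt_irrefl 0 (Set.mem_Ioi.mp (hsub h)))
  -- Key lemma: if a closed interval [u, u+m] with u ≥ 0 is inside S, then m ∉ Sstar.
  have keyS : ∀ u m : ℝ, 0 ≤ u → Set.Icc u (u + m) ⊆ S → m ∉ Sstar := by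
    intro u m hu hIcc hm
    have hmpos : 0 < m := hsub hm
    have hmul : ∀ n : ℕ, ((n : ℝ) + 1) * m ∈ Sstar := by
      intro n
      induction n with
      | zero => simpa using hm
      | succ k ih =>
        have h2 := hadd _ ih m hm
        have : ((k : ℝ) + 1) * m + m = ((↑(k + 1) : ℝ) + 1) * m := by push_cast; ring
        rwa [this] at h2
    rcases lt_or_ge u m with h | h
    · exact hdisj m hm (hIcc ⟨h.le, by linarith⟩)
    · set n := ⌈u / m⌉₊ with hn
      have hdiv_pos : 0 < u / m := div_pos (lt_of_lt_of_le hmpos h) hmpos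
      have hn1 : 1 ≤ n := Nat.one_le_ceil_iff.mpr hdiv_pos
      have hge : u ≤ (n : ℝ) * m := by
        have h1 : u / m ≤ (n : ℝ) := Nat.le_ceil (u / m)
        calc u = (u / m) * m := by field_simp
        _ ≤ (n : ℝ) * m := by nlinarith
      have hlt : (n : ℝ) * m < u + m := by
        have h2 : (n : ℝ) < u / m + 1 := Nat.ceil_lt_add_one hdiv_pos.le
        have h3 : (u / m) * m = u := by field_simp
        nlinarith
      obtain ⟨k, hk⟩ : ∃ k, n = k + 1 := ⟨n - 1, (Nat.succ_pred_eq_of_pos hn1).symm⟩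
      have hmem : ((k : ℝ) + 1) * m ∈ Sstar := hmul k
      rw [hk] at hge hlt
      push_cast at hge hlt
      exact hdisj _ hmem (hIcc ⟨hge, hlt.le⟩)
  -- not in interior criterion
  have hfr : ∀ w : ℝ, w ∈ S → (∀ ε : ℝ, 0 < ε → ∃ z, |z - w| < ε ∧ z ∉ S) →
      w ∈ frontier S := by
    intro w hw hz
    rw [hSclosed.frontier_eq]
    refine ⟨hw, fun hint => ?_⟩
    rw [mem_interior_iff_mem_nhds, Metric.mem_nhds_iff] at hint
    obtain ⟨ε, hε, hball⟩ := hint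
    obtain ⟨z, hz1, hz2⟩ := hz ε hε
    exact hz2 (hball (by simpa [Metric.mem_ball, Real.dist_eq] using hz1))
  have h0front : (0 : ℝ) ∈ frontier S := by
    refine hfr 0 h0S (fun ε hε => ⟨-(ε / 2), ?_, fun h => ?_⟩)
    · rw [sub_zero, abs_neg, abs_of_pos (by linarith)]; linarith
    · have := hSsub h; simp at this; linarith
  have hLS : L ∈ S := hL ▸ hSclosed.csSup_mem hne hbdd
  have hLfront : L ∈ frontier S := by
    refine hfr L hLS (fun ε hε => ⟨L + ε / 2, ?_, fun h => ?_⟩)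
    · rw [add_sub_cancel_left, abs_of_pos (by linarith)]; linarith
    · have h2 : L + ε / 2 ≤ sSup S := le_csSup hbdd h
      rw [← hL] at h2
      linarith
  intro s hs
  obtain ⟨hsS, hs0, hsL⟩ := hs
  -- properties of a s
  have hAne : {y | y ∈ frontier S ∧ y ≤ s}.Nonempty := ⟨0, h0front, hs0⟩
  have hAbdd : BddAbove {y | y ∈ frontier S ∧ y ≤ s} := ⟨s, fun y hy => hy.2⟩
  have haA : a s ∈ frontier S ∧ a s ≤ s := by
    have h1 := csSup_mem_closure hAne hAbdd
    have h2 : closure {y | y ∈ frontier S ∧ y ≤ s} ⊆ frontier S ∩ Set.Iic s := by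
      refine closure_minimal ?_ (isClosed_frontier.inter isClosed_Iic)
      intro y hy; exact ⟨hy.1, hy.2⟩
    rw [ha s]
    exact h2 h1
  have ha0 : 0 ≤ a s := by
    rw [ha s]; exact le_csSup hAbdd ⟨h0front, hs0⟩
  -- properties of b s
  have hBne : {y | y ∈ frontier S ∧ s ≤ y}.Nonempty := ⟨L, hLfront, hsL⟩
  have hBbdd : BddBelow {y | y ∈ frontier S ∧ s ≤ y} := ⟨s, fun y hy => hy.2⟩
  have hbB : b s ∈ frontier S ∧ s ≤ b s := by
    have h1 := csInf_mem_closure hBne hBbdd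
    have h2 : closure {y | y ∈ frontier S ∧ s ≤ y} ⊆ frontier S ∩ Set.Ici s := by
      refine closure_minimal ?_ (isClosed_frontier.inter isClosed_Ici)
      intro y hy; exact ⟨hy.1, hy.2⟩
    rw [hb s]
    exact h2 h1
  -- [a s, s] ⊆ S
  have hIccL : Set.Icc (a s) s ⊆ S := by
    intro x hx
    by_contra hxS
    have hxstar : x ∈ Sstar := by
      by_contra h; exact hxS (hmemS x (le_trans ha0 hx.1) h)
    have hxa : a s < x := lt_of_le_of_ne hx.1 (fun h => hxS (h ▸ hSclosed.frontier_subset haA.1))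
    have hxs : x < s := lt_of_le_of_ne hx.2 (fun h => hxS (h ▸ hsS))
    set T := S ∩ Set.Icc x s with hT
    have hTne : T.Nonempty := ⟨s, hsS, hxs.le, le_rfl⟩
    have hTbdd : BddBelow T := ⟨x, fun y hy => hy.2.1⟩
    have hTclosed : IsClosed T := hSclosed.inter isClosed_Icc
    set w := sInf T with hw
    have hwT : w ∈ T := hTclosed.csInf_mem hTne hTbdd
    have hwx : x < w := lt_of_le_of_ne hwT.2.1 (fun h => hdisj x hxstar (h ▸ hwT.1))
    have hwfront : w ∈ frontier S := by
      refine hfr w hwT.1 (fun ε hε => ⟨w - min (ε / 2) ((w - x) / 2), ?_, fun h => ?_⟩)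
      · have h1 : 0 < min (ε / 2) ((w - x) / 2) := lt_min (by linarith) (by linarith)
        rw [sub_sub_cancel_left, abs_neg, abs_of_pos h1]
        exact lt_of_le_of_lt (min_le_left _ _) (by linarith)
      · have h1 : 0 < min (ε / 2) ((w - x) / 2) := lt_min (by linarith) (by linarith)
        have h2 : min (ε / 2) ((w - x) / 2) ≤ (w - x) / 2 := min_le_right _ _
        have hmem : w - min (ε / 2) ((w - x) / 2) ∈ T :=
          ⟨h, by constructor <;> [linarith; linarith [hwT.2.2]]⟩
        have := csInf_le hTbdd hmem
        rw [← hw] at this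
        linarith
    have : w ≤ a s := by
      rw [ha s]; exact le_csSup hAbdd ⟨hwfront, hwT.2.2⟩
    linarith
  -- [s, b s] ⊆ S
  have hIccR : Set.Icc s (b s) ⊆ S := by
    intro x hx
    by_contra hxS
    have hxstar : x ∈ Sstar := by
      by_contra h; exact hxS (hmemS x (le_trans hs0 hx.1) h)
    have hxs : s < x := lt_of_le_of_ne hx.1 (fun h => hxS (h ▸ hsS))
    have hxb : x < b s := lt_of_le_of_ne hx.2 (fun h => hxS (h ▸ hSclosed.frontier_subset hbB.1))
    set T := S ∩ Set.Icc s x with hT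
    have hTne : T.Nonempty := ⟨s, hsS, le_rfl, hxs.le⟩
    have hTbdd : BddAbove T := ⟨x, fun y hy => hy.2.2⟩
    have hTclosed : IsClosed T := hSclosed.inter isClosed_Icc
    set w := sSup T with hw
    have hwT : w ∈ T := hTclosed.csSup_mem hTne hTbdd
    have hwx : w < x := lt_of_le_of_ne hwT.2.2 (fun h => hdisj x hxstar (h ▸ hwT.1))
    have hwfront : w ∈ frontier S := by
      refine hfr w hwT.1 (fun ε hε => ⟨w + min (ε / 2) ((x - w) / 2), ?_, fun h => ?_⟩)
      · have h1 : 0 < min (ε / 2) ((x - w) / 2) := lt_min (by linarith) (by linarith)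
        rw [add_sub_cancel_left, abs_of_pos h1]
        exact lt_of_le_of_lt (min_le_left _ _) (by linarith)
      · have h1 : 0 < min (ε / 2) ((x - w) / 2) := lt_min (by linarith) (by linarith)
        have h2 : min (ε / 2) ((x - w) / 2) ≤ (x - w) / 2 := min_le_right _ _
        have hmem : w + min (ε / 2) ((x - w) / 2) ∈ T :=
          ⟨h, by constructor <;> [linarith [hwT.2.1]; linarith]⟩
        have := le_csSup hTbdd hmem
        rw [← hw] at this
        linarith
    have : b s ≤ w := by
      rw [hb s]; exact csInf_le hBbdd ⟨hwfront, hwT.2.1⟩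
    linarith
  constructor
  · have h1 : Set.Icc (a s) (a s + (s - a s)) ⊆ S := by
      rw [show a s + (s - a s) = s by ring]; exact hIccL
    exact hmemS _ (by linarith [haA.2]) (keyS (a s) (s - a s) ha0 h1)
  · have h1 : Set.Icc s (s + (b s - s)) ⊆ S := by
      rw [show s + (b s - s) = b s by ring]; exact hIccR
    exact hmemS _ (by linarith [hbB.2]) (keyS s (b s - s) hs0 h1)
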